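/- arXiv:0807.1372 — 2 statements merged into one kernel-verified Lean document; each statement's English description precedes it below -/
import Mathlib

section
/- The capacity of the additive matrix channel Y = X + W, where X, Y ∈ F_q^{n×m} and W is uniform over the set of n×m matrices of rank t (independent of X), equals nm - log_q |T_{n×m,t}|, where |T_{n×m,t}| is the number of n×m matrices of rank t. The capacity is achieved by the uniform input distribution. -/
open scoped BigOperators
open Finset

lemma aux_jensen_bound {ι : Type*} [Fintype ι] (b : ℝ) (hb : 1 < b) (w g : ι → ℝ)
    (hw0 : ∀ z, 0 ≤ w z) (hw1 : ∑ z, w z = 1) (hg : ∀ z, 0 < g z) (C : ℝ)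
    (hC : ∑ z, w z * g z ≤ C) :
    ∑ z, w z * Real.logb b (g z) ≤ Real.logb b C := by
  have hlb : 0 < Real.log b := Real.log_pos hb
  have hSpos : 0 < ∑ z, w z * g z := by
    have hne : ∃ z : ι, 0 < w z := by
      by_contra h
      push_neg at h
      have : ∑ z : ι, w z = 0 := Finset.sum_eq_zero fun z _ => le_antisymm (h z) (hw0 z)
      simp [this] at hw1
    obtain ⟨z, hz⟩ := hne
    refine Finset.sum_pos' (fun i _ => mul_nonneg (hw0 i) (hg i).le)
      ⟨z, Finset.mem_univ z, mul_pos hz (hg z)⟩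
  have hjensen : ∑ z, w z • Real.log (g z) ≤ Real.log (∑ z, w z • g z) :=
    (strictConcaveOn_log_Ioi.concaveOn).le_map_sum (fun i _ => hw0 i) hw1 (fun i _ => hg i)
  simp only [smul_eq_mul] at hjensen
  have h2 : Real.log (∑ z, w z * g z) ≤ Real.log C := Real.log_le_log hSpos hC
  calc ∑ z, w z * Real.logb b (g z) = (∑ z, w z * Real.log (g z)) / Real.log b := by
        rw [Finset.sum_div]
        exact Finset.sum_congr rfl fun z _ => by rw [Real.logb, mul_div_assoc]
    _ ≤ Real.log C / Real.log b := by gcongr; exact hjensen.trans h2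
    _ = Real.logb b C := rfl

open Matrix in
lemma aux_exists_rank {F : Type*} [Field F] (n m t : ℕ) (htn : t ≤ n) (htm : t ≤ m) :
    ∃ A : Matrix (Fin n) (Fin m) F, A.rank = t := by
  classical
  refine ⟨Matrix.of fun i j => if ((i:ℕ) = j ∧ (i:ℕ) < t) then 1 else 0, ?_⟩
  set g : Fin t → (Fin n → F) := fun k => Pi.single (Fin.castLE htn k) 1 with hg
  have hli : LinearIndependent F g := by
    have := (Pi.basisFun F (Fin n)).linearIndependent
    have h2 := this.comp (Fin.castLE htn) (Fin.castLE_injective htn)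
    convert h2 using 1
    funext k
    simp [g, Pi.basisFun_apply]
  have hspan : Submodule.span F (Set.range ((Matrix.of (fun i j => if ((i:ℕ) = j ∧ (i:ℕ) < t) then (1:F) else 0) : Matrix (Fin n) (Fin m) F))ᵀ) = Submodule.span F (Set.range g) := by
    apply le_antisymm
    · rw [Submodule.span_le]
      rintro _ ⟨j, rfl⟩
      by_cases hj : (j:ℕ) < t
      · apply Submodule.subset_span
        refine ⟨⟨j, hj⟩, ?_⟩
        funext i
        simp only [g, Matrix.transpose_apply, Matrix.of_apply]
        rcases eq_or_ne i (Fin.castLE htn ⟨j, hj⟩) with h | h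
        · subst h; simp [Fin.castLE, hj]
        · rw [Pi.single_eq_of_ne h]
          have : (i:ℕ) ≠ j := by
            intro hc; apply h; apply Fin.ext; simpa using hc
          simp [this]
      · have : ((Matrix.of (fun i j => if ((i:ℕ) = j ∧ (i:ℕ) < t) then (1:F) else 0) : Matrix (Fin n) (Fin m) F))ᵀ j = 0 := by
          funext i
          simp only [Matrix.transpose_apply, Matrix.of_apply, Pi.zero_apply]
          rw [if_neg]; rintro ⟨h1, h2⟩; omega
        rw [this]; exact Submodule.zero_mem _
    · rw [Submodule.span_le]
      rintro _ ⟨k, rfl⟩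
      apply Submodule.subset_span
      refine ⟨Fin.castLE htm k, ?_⟩
      funext i
      simp only [g, Matrix.transpose_apply, Matrix.of_apply]
      rcases eq_or_ne i (Fin.castLE htn k) with h | h
      · subst h; simp [Fin.castLE, k.isLt]
      · rw [Pi.single_eq_of_ne h]
        have : (i:ℕ) ≠ (k:ℕ) := by
          intro hc; apply h; apply Fin.ext; simpa using hc
        simp [Fin.castLE, this]
  rw [Matrix.rank_eq_finrank_span_cols]
  erw [hspan]
  rw [finrank_span_eq_card hli, Fintype.card_fin]

/-- Mutual information (logarithm base `b`) between the input and output of a discrete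
memoryless channel with finite input alphabet `α`, finite output alphabet `β`, transition
probabilities `K` and input distribution `p`. -/
noncomputable def mutualInfoB {α β : Type*} [Fintype α] [Fintype β]
    (b : ℝ) (p : α → ℝ) (K : α → β → ℝ) : ℝ :=
  ∑ x : α, ∑ y : β, p x * K x y *
    Real.logb b (K x y / ∑ x' : α, p x' * K x' y)

/-- The capacity (in base-`b` units) of a discrete channel with transition probabilities `K`:
the supremum of the mutual information over all input distributions. -/
noncomputable def capacityB {α β : Type*} [Fintype α] [Fintype β]
    (b : ℝ) (K : α → β → ℝ) : ℝ :=
  sSup {c : ℝ | ∃ p : α → ℝ, (∀ x, 0 ≤ p x) ∧ (∑ x : α, p x) = 1 ∧ c = mutualInfoB b p K}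


/-- the capacity (in `q`-ary units) of the additive matrix channel `Y = X + W`,
with `W` uniform over the `n × m` matrices of rank `t` over `F_q` and independent of `X`,
equals `nm - log_q |T_{n×m,t}|`; moreover the uniform input distribution achieves it. -/
theorem stmt_8 {F : Type*} [Field F] [Fintype F] (n m t : ℕ) (ht : t ≤ min n m) :
    capacityB (Fintype.card F)
        (fun X Y : Matrix (Fin n) (Fin m) F =>
          if (Y - X).rank = t
          then 1 / (Nat.card {W : Matrix (Fin n) (Fin m) F // W.rank = t} : ℝ)
          else 0)
      = (n : ℝ) * m -
          Real.logb (Fintype.card F)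
            (Nat.card {W : Matrix (Fin n) (Fin m) F // W.rank = t}) ∧
    mutualInfoB (Fintype.card F)
        (fun _ : Matrix (Fin n) (Fin m) F =>
          (Fintype.card (Matrix (Fin n) (Fin m) F) : ℝ)⁻¹)
        (fun X Y : Matrix (Fin n) (Fin m) F =>
          if (Y - X).rank = t
          then 1 / (Nat.card {W : Matrix (Fin n) (Fin m) F // W.rank = t} : ℝ)
          else 0)
      = (n : ℝ) * m -
          Real.logb (Fintype.card F)
            (Nat.card {W : Matrix (Fin n) (Fin m) F // W.rank = t}) := by
  have htn : t ≤ n := ht.trans (min_le_left _ _)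
  have htm : t ≤ m := ht.trans (min_le_right _ _)
  set TN : ℕ := Nat.card {W : Matrix (Fin n) (Fin m) F // W.rank = t} with hTN
  set K : Matrix (Fin n) (Fin m) F → Matrix (Fin n) (Fin m) F → ℝ :=
    fun X Y => if (Y - X).rank = t then 1 / (TN : ℝ) else 0 with hK
  set N : ℕ := Fintype.card (Matrix (Fin n) (Fin m) F) with hN
  set q : ℝ := (Fintype.card F : ℝ) with hq
  obtain ⟨A, hA⟩ := aux_exists_rank (F := F) n m t htn htm
  have hTpos : 0 < TN := by
    rw [hTN]
    have : Nonempty {W : Matrix (Fin n) (Fin m) F // W.rank = t} := ⟨⟨A, hA⟩⟩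
    exact Nat.card_pos
  have hT0 : (TN : ℝ) ≠ 0 := Nat.cast_ne_zero.mpr hTpos.ne'
  have hNpos : 0 < N := Fintype.card_pos
  have hN0 : (N : ℝ) ≠ 0 := Nat.cast_ne_zero.mpr hNpos.ne'
  have hq1 : 1 < q := by rw [hq]; exact_mod_cast Fintype.one_lt_card
  -- counting lemmas
  have hcol : ∀ x : Matrix (Fin n) (Fin m) F,
      (Finset.univ.filter fun y => (y - x).rank = t).card = TN := by
    intro x
    rw [hTN, Nat.card_eq_fintype_card, Fintype.card_subtype]
    apply Finset.card_bij (fun y _ => y - x)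
    · intro a ha; simp only [Finset.mem_filter, Finset.mem_univ, true_and] at ha ⊢; exact ha
    · intro a _ b _ h; exact sub_left_inj.mp h
    · intro W hW; simp only [Finset.mem_filter, Finset.mem_univ, true_and] at hW
      exact ⟨W + x, by simp only [Finset.mem_filter, Finset.mem_univ, true_and,
        add_sub_cancel_right]; exact hW, by simp⟩
  have hrow : ∀ y : Matrix (Fin n) (Fin m) F,
      (Finset.univ.filter fun x => (y - x).rank = t).card = TN := by
    intro y
    rw [hTN, Nat.card_eq_fintype_card, Fintype.card_subtype]
    apply Finset.card_bij (fun x _ => y - x)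
    · intro a ha; simp only [Finset.mem_filter, Finset.mem_univ, true_and] at ha ⊢; exact ha
    · intro a _ b _ h; exact sub_right_inj.mp h
    · intro W hW; simp only [Finset.mem_filter, Finset.mem_univ, true_and] at hW
      exact ⟨y - W, by simp only [Finset.mem_filter, Finset.mem_univ, true_and,
        sub_sub_cancel]; exact hW, by simp [sub_sub_cancel]⟩
  have hK0 : ∀ x y, 0 ≤ K x y := by
    intro x y; rw [hK]; dsimp only; split
    · positivity
    · exact le_rfl
  have hKval : ∀ x y, K x y = 0 ∨ K x y = 1 / (TN:ℝ) := by
    intro x y; rw [hK]; dsimp only; split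
    · exact Or.inr rfl
    · exact Or.inl rfl
  have hKsum_row : ∀ x, ∑ y, K x y = 1 := by
    intro x
    rw [hK]; dsimp only
    rw [Finset.sum_ite, Finset.sum_const, Finset.sum_const_zero, add_zero, nsmul_eq_mul, hcol x]
    field_simp
  have hKsum_col : ∀ y, ∑ x, K x y = 1 := by
    intro y
    rw [hK]; dsimp only
    rw [Finset.sum_ite, Finset.sum_const, Finset.sum_const_zero, add_zero, nsmul_eq_mul, hrow y]
    field_simp
  -- the uniform-input mutual information
  have huniform : mutualInfoB q (fun _ : Matrix (Fin n) (Fin m) F => (N:ℝ)⁻¹) K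
      = Real.logb q ((N:ℝ) / TN) := by
    unfold mutualInfoB
    have hr : ∀ y : Matrix (Fin n) (Fin m) F, ∑ x', (N:ℝ)⁻¹ * K x' y = (N:ℝ)⁻¹ := by
      intro y; rw [← Finset.mul_sum, hKsum_col y, mul_one]
    have hdiv : (1 / (TN:ℝ)) / ((N:ℝ))⁻¹ = (N:ℝ) / TN := by
      field_simp
    calc ∑ x, ∑ y, (N:ℝ)⁻¹ * K x y * Real.logb q (K x y / ∑ x', (N:ℝ)⁻¹ * K x' y)
        = ∑ x : Matrix (Fin n) (Fin m) F, ∑ y : Matrix (Fin n) (Fin m) F,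
            K x y * ((N:ℝ)⁻¹ * Real.logb q ((N:ℝ) / TN)) := by
          refine Finset.sum_congr rfl fun x _ => Finset.sum_congr rfl fun y _ => ?_
          rw [hr y]
          rcases hKval x y with h | h
          · rw [h]; ring
          · rw [h, hdiv]; ring
      _ = ∑ x : Matrix (Fin n) (Fin m) F, (N:ℝ)⁻¹ * Real.logb q ((N:ℝ) / TN) := by
          refine Finset.sum_congr rfl fun x _ => ?_
          rw [← Finset.sum_mul, hKsum_row x, one_mul]
      _ = Real.logb q ((N:ℝ) / TN) := by
          rw [Finset.sum_const, nsmul_eq_mul]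
          rw [show (Finset.univ.card : ℝ) = (N:ℝ) by rw [hN]; simp]
          field_simp
  -- q-ary logarithm identities
  have hcard : (N : ℝ) = q ^ (n * m) := by
    rw [hN, hq]
    have h1 : Fintype.card (Matrix (Fin n) (Fin m) F) = Fintype.card F ^ (n * m) := by
      rw [Fintype.card_congr (Matrix.of (m := Fin n) (n := Fin m) (α := F)).symm]
      simp [Fintype.card_fun, ← pow_mul, Nat.mul_comm]
    rw [h1]; push_cast; ring
  have hfinal : Real.logb q ((N:ℝ) / TN) = (n:ℝ) * m - Real.logb q (TN:ℝ) := by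
    rw [Real.logb_div hN0 hT0]
    congr 1
    rw [hcard, Real.logb_pow, Real.logb_self_eq_one hq1]
    push_cast; ring
  -- upper bound for arbitrary input distribution
  have hub : ∀ p : Matrix (Fin n) (Fin m) F → ℝ, (∀ x, 0 ≤ p x) → (∑ x, p x) = 1 →
      mutualInfoB q p K ≤ Real.logb q ((N:ℝ) / TN) := by
    intro p hp0 hp1
    classical
    set r : Matrix (Fin n) (Fin m) F → ℝ := fun y => ∑ x', p x' * K x' y with hr
    set w : Matrix (Fin n) (Fin m) F × Matrix (Fin n) (Fin m) F → ℝ :=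
      fun z => p z.1 * K z.1 z.2 with hw
    set g : Matrix (Fin n) (Fin m) F × Matrix (Fin n) (Fin m) F → ℝ :=
      fun z => if w z = 0 then 1 else K z.1 z.2 / r z.2 with hg
    have hw0 : ∀ z, 0 ≤ w z := fun z => mul_nonneg (hp0 _) (hK0 _ _)
    have hw1 : ∑ z, w z = 1 := by
      rw [Fintype.sum_prod_type]
      calc ∑ x, ∑ y, w (x, y) = ∑ x, p x * ∑ y, K x y := by
            refine Finset.sum_congr rfl fun x _ => ?_
            rw [Finset.mul_sum]
        _ = 1 := by
            simp_rw [hKsum_row, mul_one]; exact hp1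
    have hrpos : ∀ z : Matrix (Fin n) (Fin m) F × Matrix (Fin n) (Fin m) F,
        w z ≠ 0 → 0 < r z.2 := by
      intro z hz
      have h1 : 0 < w z := (hw0 z).lt_of_ne (Ne.symm hz)
      refine lt_of_lt_of_le h1 ?_
      exact Finset.single_le_sum (f := fun x' => p x' * K x' z.2)
        (fun i _ => mul_nonneg (hp0 i) (hK0 _ _)) (Finset.mem_univ z.1)
    have hgpos : ∀ z, 0 < g z := by
      intro z; rw [hg]; dsimp only
      split
      · exact one_pos
      · rename_i hz
        refine div_pos ?_ (hrpos z hz)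
        rcases hKval z.1 z.2 with h | h
        · exact absurd (by rw [hw]; dsimp only; rw [h, mul_zero]) hz
        · rw [h]; positivity
    have hI : mutualInfoB q p K = ∑ z : Matrix (Fin n) (Fin m) F × Matrix (Fin n) (Fin m) F,
        w z * Real.logb q (g z) := by
      unfold mutualInfoB
      rw [Fintype.sum_prod_type]
      refine Finset.sum_congr rfl fun x _ => Finset.sum_congr rfl fun y _ => ?_
      by_cases hz : w (x, y) = 0
      · have hz' : p x * K x y = 0 := hz
        rw [hz', zero_mul]
        rw [hz, zero_mul]
      · have hgxy : g (x, y) = K x y / r y := by rw [hg]; dsimp only; rw [if_neg hz]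
        rw [hgxy]
    have hCsum : ∑ z : Matrix (Fin n) (Fin m) F × Matrix (Fin n) (Fin m) F,
        w z * g z ≤ (N:ℝ) / TN := by
      rw [Fintype.sum_prod_type_right]
      have hy : ∀ y, ∑ x, w (x, y) * g (x, y) ≤ (TN:ℝ)⁻¹ := by
        intro y
        have hterm : ∀ x, w (x, y) * g (x, y) = (TN:ℝ)⁻¹ * (w (x, y) / r y) := by
          intro x
          by_cases hz : w (x, y) = 0
          · rw [hz, zero_mul, zero_div, mul_zero]
          · have hgxy : g (x, y) = K x y / r y := by rw [hg]; dsimp only; rw [if_neg hz]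
            rw [hgxy]
            rcases hKval x y with h | h
            · exact absurd (show w (x, y) = 0 by
                show p x * K x y = 0
                rw [h, mul_zero]) hz
            · rw [h]
              rw [div_eq_mul_inv, div_eq_mul_inv, div_eq_mul_inv]
              ring
        calc ∑ x, w (x, y) * g (x, y)
            = (TN:ℝ)⁻¹ * ((∑ x, w (x, y)) / r y) := by
              simp_rw [hterm]
              rw [← Finset.mul_sum, ← Finset.sum_div]
          _ = (TN:ℝ)⁻¹ * (r y / r y) := rfl
          _ ≤ (TN:ℝ)⁻¹ * 1 := by
              refine mul_le_mul_of_nonneg_left ?_ (by positivity)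
              rcases eq_or_ne (r y) 0 with h | h
              · rw [h, div_zero]; norm_num
              · rw [div_self h]
          _ = (TN:ℝ)⁻¹ := mul_one _
      calc ∑ y : Matrix (Fin n) (Fin m) F, ∑ x, w (x, y) * g (x, y)
          ≤ ∑ _y : Matrix (Fin n) (Fin m) F, (TN:ℝ)⁻¹ :=
            Finset.sum_le_sum fun y _ => hy y
        _ = (N:ℝ) * (TN:ℝ)⁻¹ := by
            rw [Finset.sum_const, nsmul_eq_mul, Finset.card_univ, ← hN]
        _ = (N:ℝ) / TN := by rw [div_eq_mul_inv]
    rw [hI]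
    exact aux_jensen_bound q hq1 w g hw0 hw1 hgpos _ hCsum
  -- capacity
  have hpU0 : ∀ x : Matrix (Fin n) (Fin m) F, (0:ℝ) ≤ (N:ℝ)⁻¹ := fun _ => by positivity
  have hpU1 : ∑ _x : Matrix (Fin n) (Fin m) F, ((N:ℝ))⁻¹ = 1 := by
    rw [Finset.sum_const, nsmul_eq_mul]
    rw [show (Finset.univ.card : ℝ) = (N:ℝ) by rw [hN]; simp]
    field_simp
  have hcap : capacityB q K = Real.logb q ((N:ℝ) / TN) := by
    unfold capacityB
    apply IsGreatest.csSup_eq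
    constructor
    · exact ⟨fun _ => (N:ℝ)⁻¹, hpU0, hpU1, huniform.symm⟩
    · rintro c ⟨p, hp0, hp1, rfl⟩
      exact hub p hp0 hp1
  constructor
  · rw [hcap, hfinal]
  · rw [huniform, hfinal]
end

section
/- The capacity of the additive matrix channel, C = nm - log_q |T_{n×m,t}|, satisfies C = (m-t)(n-t) + log_q ∏_{i=0}^{t-1} (1-q^{i-t})/((1-q^{i-n})(1-q^{i-m})). In particular, for fixed n, m, t, lim_{q→∞} C = (m-t)(n-t). -/
open scoped BigOperators

/-- The capacity of the additive matrix channel (`Y = X + W`, `W` uniform of rank `t`),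
in `q`-ary units: `C = nm - log_q |T_{n×m,t}|`. -/
noncomputable def amcCapacity (F : Type) [Field F] [Fintype F] (n m t : ℕ) : ℝ :=
  (n : ℝ) * m -
    Real.logb (Fintype.card F)
      (Nat.card {W : Matrix (Fin n) (Fin m) F // W.rank = t})

open Matrix Module


section Counting

variable {F : Type} [Field F] [Fintype F]

lemma mulVecLin_toMatrix'' {k l : ℕ} (f : (Fin k → F) →ₗ[F] (Fin l → F)) :
    Matrix.mulVecLin (LinearMap.toMatrix' f) = f := by
  rw [← Matrix.toLin'_apply', Matrix.toLin'_toMatrix']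

lemma toMatrix''_mulVecLin {k l : ℕ} (M : Matrix (Fin l) (Fin k) F) :
    LinearMap.toMatrix' (Matrix.mulVecLin M) = M := by
  rw [← Matrix.toLin'_apply', LinearMap.toMatrix'_toLin']

lemma rank_eq_iff_li {n t : ℕ} (A : Matrix (Fin n) (Fin t) F) :
    A.rank = t ↔ LinearIndependent F Aᵀ := by
  show A.rank = t ↔ LinearIndependent F A.col
  rw [linearIndependent_iff_card_eq_finrank_span, Set.finrank,
    ← Matrix.rank_eq_finrank_span_cols, Fintype.card_fin, eq_comm]

lemma card_colRank (n t : ℕ) (h : t ≤ n) :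
    Nat.card {A : Matrix (Fin n) (Fin t) F // A.rank = t} =
      ∏ i : Fin t, (Fintype.card F ^ n - Fintype.card F ^ (i : ℕ)) := by
  have e : {A : Matrix (Fin n) (Fin t) F // A.rank = t} ≃
      {s : Fin t → (Fin n → F) // LinearIndependent F s} :=
    { toFun := fun A => ⟨A.1ᵀ, (rank_eq_iff_li A.1).1 A.2⟩
      invFun := fun s => ⟨(Matrix.of s.1)ᵀ, (rank_eq_iff_li _).2 (by
        exact s.2)⟩
      left_inv := fun A => Subtype.ext (Matrix.transpose_transpose _)
      right_inv := fun s => rfl }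
  rw [Nat.card_congr e]
  have hfr : Module.finrank F (Fin n → F) = n := (Module.finrank_fin_fun F)
  rw [card_linearIndependent (by rw [hfr]; exact h)]
  simp [hfr]

lemma inj_of_rank {n t : ℕ} {A : Matrix (Fin n) (Fin t) F} (h : A.rank = t) :
    Function.Injective A.mulVecLin := by
  rw [← LinearMap.ker_eq_bot]
  have hr : finrank F (LinearMap.range A.mulVecLin) = t := h
  have h1 := LinearMap.finrank_range_add_finrank_ker A.mulVecLin
  rw [hr, (Module.finrank_fin_fun F)] at h1
  have h0 : finrank F (LinearMap.ker A.mulVecLin) = 0 := by omega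
  exact Submodule.finrank_eq_zero.mp h0

lemma surj_of_rank {t m : ℕ} {B : Matrix (Fin t) (Fin m) F} (h : B.rank = t) :
    Function.Surjective B.mulVecLin := by
  rw [← LinearMap.range_eq_top]
  apply Submodule.eq_top_of_finrank_eq
  rw [(Module.finrank_fin_fun F)]
  exact h

lemma range_mul_of_surj {n m t : ℕ} (A : Matrix (Fin n) (Fin t) F)
    {B : Matrix (Fin t) (Fin m) F} (hB : Function.Surjective B.mulVecLin) :
    LinearMap.range (A * B).mulVecLin = LinearMap.range A.mulVecLin := by
  rw [Matrix.mulVecLin_mul, LinearMap.range_comp, LinearMap.range_eq_top.2 hB,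
    Submodule.map_top]

lemma rank_mul_full {n m t : ℕ} {A : Matrix (Fin n) (Fin t) F}
    {B : Matrix (Fin t) (Fin m) F} (hA : A.rank = t) (hB : B.rank = t) :
    (A * B).rank = t := by
  have h : (A * B).rank = A.rank := by
    show finrank F (LinearMap.range (A * B).mulVecLin) = _
    rw [range_mul_of_surj A (surj_of_rank hB)]; rfl
  rw [h, hA]

lemma mul_left_cancel_of_inj {n t k : ℕ} {A : Matrix (Fin n) (Fin t) F}
    (hA : Function.Injective A.mulVecLin)
    {X Y : Matrix (Fin t) (Fin k) F} (h : A * X = A * Y) : X = Y := by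
  ext i j
  have hcol : A.mulVecLin (fun r => X r j) = A.mulVecLin (fun r => Y r j) := by
    funext l
    simpa [Matrix.mulVecLin_apply, Matrix.mulVec, Matrix.mul_apply, dotProduct] using
      congrFun (congrFun h l) j
  exact congrFun (hA hcol) i

lemma isUnit_det_of_rank {t : ℕ} {G : Matrix (Fin t) (Fin t) F} (h : G.rank = t) :
    IsUnit G.det := by
  rw [← Matrix.isUnit_iff_isUnit_det, ← Matrix.mulVec_surjective_iff_isUnit]
  exact fun v => surj_of_rank h v

lemma card_key (n m t : ℕ) (htn : t ≤ n) (htm : t ≤ m) :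
    Nat.card {W : Matrix (Fin n) (Fin m) F // W.rank = t} *
        ∏ i : Fin t, (Fintype.card F ^ t - Fintype.card F ^ (i : ℕ))
      = (∏ i : Fin t, (Fintype.card F ^ n - Fintype.card F ^ (i : ℕ))) *
        ∏ i : Fin t, (Fintype.card F ^ m - Fintype.card F ^ (i : ℕ)) := by
  classical
  set SA := {A : Matrix (Fin n) (Fin t) F // A.rank = t} with hSA
  set SB := {B : Matrix (Fin t) (Fin m) F // B.rank = t} with hSB
  set T := {W : Matrix (Fin n) (Fin m) F // W.rank = t} with hT
  set St := {G : Matrix (Fin t) (Fin t) F // G.rank = t} with hSt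
  have hcardSB : Nat.card SB =
      ∏ i : Fin t, (Fintype.card F ^ m - Fintype.card F ^ (i : ℕ)) := by
    have e : SB ≃ {A : Matrix (Fin m) (Fin t) F // A.rank = t} :=
      { toFun := fun B => ⟨B.1ᵀ, by rw [Matrix.rank_transpose]; exact B.2⟩
        invFun := fun A => ⟨A.1ᵀ, by rw [Matrix.rank_transpose]; exact A.2⟩
        left_inv := fun B => Subtype.ext (Matrix.transpose_transpose _)
        right_inv := fun A => Subtype.ext (Matrix.transpose_transpose _) }
    rw [Nat.card_congr e, card_colRank m t htm]
  set μ : SA × SB → T := fun p => ⟨p.1.1 * p.2.1, rank_mul_full p.1.2 p.2.2⟩ with hμ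
  have hfib : ∀ W : T, Nat.card {p : SA × SB // μ p = W} = Nat.card St := by
    rintro ⟨W, hW⟩
    set R : Submodule F (Fin n → F) := LinearMap.range W.mulVecLin with hRdef
    have hRfr : finrank F R = t := hW
    let b : Basis (Fin t) F R := finBasisOfFinrankEq F R hRfr
    let e : (Fin t → F) ≃ₗ[F] R := b.equivFun.symm
    set A₀ : Matrix (Fin n) (Fin t) F :=
      LinearMap.toMatrix' (R.subtype ∘ₗ (e : (Fin t → F) →ₗ[F] R)) with hA₀
    set B₀ : Matrix (Fin t) (Fin m) F :=
      LinearMap.toMatrix' ((b.equivFun : R →ₗ[F] (Fin t → F)) ∘ₗ W.mulVecLin.rangeRestrict)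
      with hB₀
    have hA₀lin : A₀.mulVecLin = R.subtype ∘ₗ (e : (Fin t → F) →ₗ[F] R) :=
      mulVecLin_toMatrix'' _
    have hA₀inj : Function.Injective A₀.mulVecLin := by
      rw [hA₀lin]
      exact R.injective_subtype.comp e.injective
    have hA₀rank : A₀.rank = t := by
      show finrank F (LinearMap.range A₀.mulVecLin) = t
      rw [LinearMap.finrank_range_of_inj hA₀inj, (Module.finrank_fin_fun F)]
    have hB₀lin : B₀.mulVecLin =
        (b.equivFun : R →ₗ[F] (Fin t → F)) ∘ₗ W.mulVecLin.rangeRestrict :=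
      mulVecLin_toMatrix'' _
    have hB₀surj : Function.Surjective B₀.mulVecLin := by
      rw [hB₀lin]
      exact b.equivFun.surjective.comp W.mulVecLin.surjective_rangeRestrict
    have hB₀rank : B₀.rank = t := by
      show finrank F (LinearMap.range B₀.mulVecLin) = t
      rw [LinearMap.range_eq_top.2 hB₀surj, finrank_top, (Module.finrank_fin_fun F)]
    have hW0 : A₀ * B₀ = W := by
      rw [hA₀, hB₀, ← LinearMap.toMatrix'_comp]
      have hcomp : (R.subtype ∘ₗ (e : (Fin t → F) →ₗ[F] R)) ∘ₗ
          ((b.equivFun : R →ₗ[F] (Fin t → F)) ∘ₗ W.mulVecLin.rangeRestrict)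
          = W.mulVecLin := by
        refine LinearMap.ext fun v => ?_
        show ((b.equivFun.symm (b.equivFun (W.mulVecLin.rangeRestrict v)) : R) : Fin n → F)
          = W.mulVecLin v
        rw [LinearEquiv.symm_apply_apply]
        rfl
      rw [hcomp, toMatrix''_mulVecLin]
    let Ψ : St → {p : SA × SB // μ p = (⟨W, hW⟩ : T)} := fun G =>
      ⟨⟨⟨A₀ * G.1, by
          rw [Matrix.rank_mul_eq_left_of_isUnit_det G.1 A₀ (isUnit_det_of_rank G.2)]
          exact hA₀rank⟩,
        ⟨G.1⁻¹ * B₀, by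
          rw [Matrix.rank_mul_eq_right_of_isUnit_det G.1⁻¹ B₀
            (Matrix.isUnit_nonsing_inv_det _ (isUnit_det_of_rank G.2))]
          exact hB₀rank⟩⟩,
       Subtype.ext (by
         show A₀ * G.1 * (G.1⁻¹ * B₀) = W
         rw [Matrix.mul_assoc, Matrix.mul_nonsing_inv_cancel_left _ _
           (isUnit_det_of_rank G.2), hW0])⟩
    have hbij : Function.Bijective Ψ := by
      constructor
      · intro G G' hGG
        apply Subtype.ext
        apply mul_left_cancel_of_inj hA₀inj
        exact congrArg (fun p => p.1.1.1) hGG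
      · rintro ⟨⟨⟨A, hA⟩, ⟨B, hB⟩⟩, hAB⟩
        have hABW : A * B = W := congrArg Subtype.val hAB
        have hBsurj := surj_of_rank hB
        have hrange : LinearMap.range A.mulVecLin = R := by
          rw [hRdef, ← hABW, range_mul_of_surj A hBsurj]
        have hmem : ∀ v, A.mulVecLin v ∈ R := fun v => by
          rw [← hrange]; exact LinearMap.mem_range_self _ v
        set g : (Fin t → F) →ₗ[F] (Fin t → F) :=
          (b.equivFun : R →ₗ[F] (Fin t → F)) ∘ₗ LinearMap.codRestrict R A.mulVecLin hmem
          with hg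
        set G := LinearMap.toMatrix' g with hGdef
        have hGlin : G.mulVecLin = g := mulVecLin_toMatrix'' _
        have hginj : Function.Injective g := by
          apply b.equivFun.injective.comp
          rw [← LinearMap.ker_eq_bot, LinearMap.ker_codRestrict, LinearMap.ker_eq_bot]
          exact inj_of_rank hA
        have hGrank : G.rank = t := by
          show finrank F (LinearMap.range G.mulVecLin) = t
          rw [hGlin, LinearMap.finrank_range_of_inj hginj, (Module.finrank_fin_fun F)]
        have hGA : A₀ * G = A := by
          rw [hA₀, hGdef, ← LinearMap.toMatrix'_comp]
          have hcomp : (R.subtype ∘ₗ (e : (Fin t → F) →ₗ[F] R)) ∘ₗ g = A.mulVecLin := by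
            refine LinearMap.ext fun v => ?_
            show ((b.equivFun.symm (b.equivFun (LinearMap.codRestrict R A.mulVecLin hmem v)) :
              R) : Fin n → F) = A.mulVecLin v
            rw [LinearEquiv.symm_apply_apply]
            rfl
          rw [hcomp, toMatrix''_mulVecLin]
        have hGB : G⁻¹ * B₀ = B := by
          have h1 : A₀ * (G * B) = A₀ * B₀ := by
            rw [← Matrix.mul_assoc, hGA, hABW, hW0]
          have h2 : G * B = B₀ := mul_left_cancel_of_inj hA₀inj h1
          rw [← h2, Matrix.nonsing_inv_mul_cancel_left _ _ (isUnit_det_of_rank hGrank)]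
        refine ⟨⟨G, hGrank⟩, ?_⟩
        apply Subtype.ext
        refine Prod.ext ?_ ?_
        · exact Subtype.ext hGA
        · exact Subtype.ext hGB
    exact (Nat.card_eq_of_bijective Ψ hbij).symm
  haveI : Fintype T := Fintype.ofFinite _
  haveI : Fintype SA := Fintype.ofFinite _
  haveI : Fintype SB := Fintype.ofFinite _
  haveI : ∀ W : T, Fintype {p : SA × SB // μ p = W} := fun W => Fintype.ofFinite _
  have hcount : Nat.card (SA × SB) = Nat.card T * Nat.card St := by
    calc Nat.card (SA × SB) = Nat.card (Σ W : T, {p : SA × SB // μ p = W}) :=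
          (Nat.card_congr (Equiv.sigmaFiberEquiv μ)).symm
      _ = ∑ W : T, Nat.card {p : SA × SB // μ p = W} := by
          rw [Nat.card_eq_fintype_card, Fintype.card_sigma]
          exact Finset.sum_congr rfl fun W _ => Nat.card_eq_fintype_card.symm
      _ = ∑ _W : T, Nat.card St := Finset.sum_congr rfl fun W _ => hfib W
      _ = Nat.card T * Nat.card St := by
          simp [Finset.sum_const, Nat.card_eq_fintype_card, Finset.card_univ]
  rw [Nat.card_prod, card_colRank n t htn, hcardSB] at hcount
  rw [← card_colRank t t le_rfl]
  exact hcount.symm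

end Counting

open scoped BigOperators

section Analytic

lemma zpow_frac {qr : ℝ} (hq : 0 < qr) (i k : ℕ) :
    qr ^ ((i : ℤ) - k) = qr ^ i / qr ^ k := by
  rw [zpow_sub₀ (ne_of_gt hq), zpow_natCast, zpow_natCast]

lemma zpow_lt_one' {qr : ℝ} (hq : 1 < qr) {i k : ℕ} (h : i < k) :
    qr ^ ((i : ℤ) - k) < 1 := by
  have hq0 : (0:ℝ) < qr := lt_trans zero_lt_one hq
  rw [zpow_frac hq0, div_lt_one (pow_pos hq0 k)]
  exact pow_lt_pow_right₀ hq h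

lemma zpow_le_half {qr : ℝ} (hq : 2 ≤ qr) {i k : ℕ} (h : i < k) :
    qr ^ ((i : ℤ) - k) ≤ 1 / 2 := by
  have hq1 : (1:ℝ) < qr := lt_of_lt_of_le one_lt_two hq
  have hq0 : (0:ℝ) < qr := lt_trans zero_lt_one hq1
  rw [zpow_frac hq0, div_le_div_iff₀ (pow_pos hq0 k) two_pos]
  have h3 : (2:ℝ) ≤ qr ^ (k - i) := le_trans hq (le_self_pow₀ hq1.le (by omega))
  have h4 : qr ^ i * qr ^ (k - i) = qr ^ k := by rw [← pow_add]; congr 1; omega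
  nlinarith [pow_pos hq0 i]

lemma zpow_pos' {qr : ℝ} (hq : 0 < qr) (z : ℤ) : 0 < qr ^ z := zpow_pos hq z

lemma amc_main (F : Type) [Field F] [Fintype F] (n m t : ℕ) (htn : t ≤ n) (htm : t ≤ m) :
    amcCapacity F n m t
      = ((m : ℝ) - t) * ((n : ℝ) - t) +
          Real.logb (Fintype.card F)
            (∏ i ∈ Finset.range t,
              (1 - (Fintype.card F : ℝ) ^ ((i : ℤ) - t)) /
                ((1 - (Fintype.card F : ℝ) ^ ((i : ℤ) - n)) *
                  (1 - (Fintype.card F : ℝ) ^ ((i : ℤ) - m)))) := by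
  classical
  set q : ℕ := Fintype.card F with hqdef
  have hq1 : 1 < (q : ℝ) := by exact_mod_cast Fintype.one_lt_card
  have hq0 : (0:ℝ) < q := lt_trans zero_lt_one hq1
  have hq1n : 1 ≤ q := Fintype.card_pos
  set N : ℕ := Nat.card {W : Matrix (Fin n) (Fin m) F // W.rank = t} with hNdef
  set P : ℝ := ∏ i ∈ Finset.range t,
      (1 - (q : ℝ) ^ ((i : ℤ) - t)) /
        ((1 - (q : ℝ) ^ ((i : ℤ) - n)) * (1 - (q : ℝ) ^ ((i : ℤ) - m))) with hPdef
  have hprod : ∀ k : ℕ, t ≤ k → ((∏ i : Fin t, (q ^ k - q ^ (i : ℕ)) : ℕ) : ℝ)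
      = ∏ i ∈ Finset.range t, ((q:ℝ) ^ k - (q:ℝ) ^ i) := by
    intro k hk
    rw [Nat.cast_prod, ← Fin.prod_univ_eq_prod_range (fun i => ((q:ℝ) ^ k - (q:ℝ) ^ i)) t]
    refine Finset.prod_congr rfl fun i _ => ?_
    have hle : q ^ (i:ℕ) ≤ q ^ k := Nat.pow_le_pow_right hq1n (le_trans (le_of_lt i.2) hk)
    rw [Nat.cast_sub hle]
    push_cast
    ring
  have hkeyR : (N:ℝ) * ∏ i ∈ Finset.range t, ((q:ℝ)^t - (q:ℝ)^i)
      = (∏ i ∈ Finset.range t, ((q:ℝ)^n - (q:ℝ)^i)) *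
        ∏ i ∈ Finset.range t, ((q:ℝ)^m - (q:ℝ)^i) := by
    have hk := card_key (F := F) n m t htn htm
    have := congrArg (fun x : ℕ => (x:ℝ)) hk
    simp only [Nat.cast_mul] at this
    rw [hprod t le_rfl, hprod n htn, hprod m htm] at this
    exact this
  have hsubpos : ∀ k : ℕ, t ≤ k → ∀ i ∈ Finset.range t, (0:ℝ) < (q:ℝ)^k - (q:ℝ)^i := by
    intro k hk i hi
    have : (q:ℝ)^i < (q:ℝ)^k :=
      pow_lt_pow_right₀ hq1 (lt_of_lt_of_le (Finset.mem_range.mp hi) hk)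
    linarith
  have hfpos : ∀ i ∈ Finset.range t,
      (0:ℝ) < (1 - (q : ℝ) ^ ((i : ℤ) - t)) /
        ((1 - (q : ℝ) ^ ((i : ℤ) - n)) * (1 - (q : ℝ) ^ ((i : ℤ) - m))) := by
    intro i hi
    have hit := Finset.mem_range.mp hi
    have h1 := zpow_lt_one' hq1 hit
    have h2 := zpow_lt_one' hq1 (lt_of_lt_of_le hit htn)
    have h3 := zpow_lt_one' hq1 (lt_of_lt_of_le hit htm)
    have := mul_pos (by linarith : (0:ℝ) < 1 - (q:ℝ) ^ ((i:ℤ) - n))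
      (by linarith : (0:ℝ) < 1 - (q:ℝ) ^ ((i:ℤ) - m))
    exact div_pos (by linarith) this
  have hPpos : 0 < P := Finset.prod_pos hfpos
  have hNP : (N:ℝ) * P = (q:ℝ) ^ ((n + m - t) * t) := by
    have hc : (q:ℝ) ^ ((n + m - t) * t) = ∏ _i ∈ Finset.range t, (q:ℝ)^(n + m - t) := by
      rw [Finset.prod_const, Finset.card_range, ← pow_mul]
    have hDne : (∏ i ∈ Finset.range t, ((q:ℝ)^t - (q:ℝ)^i)) ≠ 0 :=
      ne_of_gt (Finset.prod_pos (hsubpos t le_rfl))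
    have hNval : (N:ℝ) = ∏ i ∈ Finset.range t,
        (((q:ℝ)^n - (q:ℝ)^i) * ((q:ℝ)^m - (q:ℝ)^i) / ((q:ℝ)^t - (q:ℝ)^i)) := by
      rw [Finset.prod_div_distrib, Finset.prod_mul_distrib, eq_div_iff hDne]
      exact hkeyR
    rw [hc, hNval, hPdef, ← Finset.prod_mul_distrib]
    refine Finset.prod_congr rfl fun i hi => ?_
    have hit := Finset.mem_range.mp hi
    have ht' := ne_of_gt (hsubpos t le_rfl i hi)
    have hn' := ne_of_gt (hsubpos n htn i hi)
    have hm' := ne_of_gt (hsubpos m htm i hi)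
    have hqt : ((q:ℝ)^t) ≠ 0 := ne_of_gt (pow_pos hq0 t)
    have hqn : ((q:ℝ)^n) ≠ 0 := ne_of_gt (pow_pos hq0 n)
    have hqm : ((q:ℝ)^m) ≠ 0 := ne_of_gt (pow_pos hq0 m)
    rw [zpow_frac hq0 i t, zpow_frac hq0 i n, zpow_frac hq0 i m,
      one_sub_div hqt, one_sub_div hqn, one_sub_div hqm,
      pow_sub₀ (q:ℝ) (ne_of_gt hq0) (le_trans htn (Nat.le_add_right n m)), pow_add]
    field_simp
  have hNne : (N:ℝ) ≠ 0 := by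
    intro h
    rw [h, zero_mul] at hNP
    exact (ne_of_gt (pow_pos hq0 _)) hNP.symm
  have hlogb : Real.logb q N = (((n + m - t) * t : ℕ) : ℝ) - Real.logb q P := by
    have hNe : (N:ℝ) = (q:ℝ) ^ ((n + m - t) * t) / P := by
      rw [eq_div_iff (ne_of_gt hPpos)]; exact hNP
    rw [hNe, Real.logb_div (ne_of_gt (pow_pos hq0 _)) (ne_of_gt hPpos), Real.logb_pow,
      Real.logb_self_eq_one hq1, mul_one]
  show (n : ℝ) * m - Real.logb q N = ((m : ℝ) - t) * ((n : ℝ) - t) + Real.logb q P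
  rw [hlogb]
  have hc2 : (((n + m - t) * t : ℕ) : ℝ) = ((n:ℝ) + m - t) * t := by
    have : t ≤ n + m := le_trans htn (Nat.le_add_right n m)
    push_cast [Nat.cast_sub this]
    ring
  rw [hc2]
  ring

end Analytic

lemma amc_bound (F : Type) [Field F] [Fintype F] (n m t : ℕ) (htn : t ≤ n) (htm : t ≤ m) :
    |amcCapacity F n m t - ((m : ℝ) - t) * ((n : ℝ) - t)|
      ≤ t * Real.log 4 / Real.log (Fintype.card F) := by
  rw [amc_main F n m t htn htm, add_sub_cancel_left]
  set q : ℕ := Fintype.card F with hqdef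
  have hq1 : 1 < (q : ℝ) := by exact_mod_cast Fintype.one_lt_card
  have hq2 : (2:ℝ) ≤ q := by exact_mod_cast Fintype.one_lt_card
  have hq0 : (0:ℝ) < q := lt_trans zero_lt_one hq1
  have hlogq : 0 < Real.log q := Real.log_pos hq1
  set P : ℝ := ∏ i ∈ Finset.range t,
      (1 - (q : ℝ) ^ ((i : ℤ) - t)) /
        ((1 - (q : ℝ) ^ ((i : ℤ) - n)) * (1 - (q : ℝ) ^ ((i : ℤ) - m))) with hPdef
  -- factor bounds
  have hfact : ∀ i ∈ Finset.range t,
      (4:ℝ)⁻¹ ≤ (1 - (q : ℝ) ^ ((i : ℤ) - t)) /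
        ((1 - (q : ℝ) ^ ((i : ℤ) - n)) * (1 - (q : ℝ) ^ ((i : ℤ) - m)))
      ∧ (1 - (q : ℝ) ^ ((i : ℤ) - t)) /
        ((1 - (q : ℝ) ^ ((i : ℤ) - n)) * (1 - (q : ℝ) ^ ((i : ℤ) - m))) ≤ 4 := by
    intro i hi
    have hit := Finset.mem_range.mp hi
    have hin := lt_of_lt_of_le hit htn
    have him := lt_of_lt_of_le hit htm
    have ht1 := zpow_le_half hq2 hit
    have hn1 := zpow_le_half hq2 hin
    have hm1 := zpow_le_half hq2 him
    have ht0 := zpow_pos' hq0 ((i:ℤ) - t)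
    have hn0 := zpow_pos' hq0 ((i:ℤ) - n)
    have hm0 := zpow_pos' hq0 ((i:ℤ) - m)
    have hnum : (1:ℝ)/2 ≤ 1 - (q : ℝ) ^ ((i : ℤ) - t) := by linarith
    have hnum1 : 1 - (q : ℝ) ^ ((i : ℤ) - t) ≤ 1 := by linarith
    have hd1 : (1:ℝ)/2 ≤ 1 - (q : ℝ) ^ ((i : ℤ) - n) := by linarith
    have hd1' : 1 - (q : ℝ) ^ ((i : ℤ) - n) ≤ 1 := by linarith
    have hd2 : (1:ℝ)/2 ≤ 1 - (q : ℝ) ^ ((i : ℤ) - m) := by linarith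
    have hd2' : 1 - (q : ℝ) ^ ((i : ℤ) - m) ≤ 1 := by linarith
    have hden1 : (1:ℝ)/4 ≤ (1 - (q : ℝ) ^ ((i : ℤ) - n)) * (1 - (q : ℝ) ^ ((i : ℤ) - m)) := by
      nlinarith
    have hden2 : (1 - (q : ℝ) ^ ((i : ℤ) - n)) * (1 - (q : ℝ) ^ ((i : ℤ) - m)) ≤ 1 := by
      nlinarith
    have hdenpos : (0:ℝ) < (1 - (q : ℝ) ^ ((i : ℤ) - n)) * (1 - (q : ℝ) ^ ((i : ℤ) - m)) := by
      nlinarith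
    constructor
    · rw [le_div_iff₀ hdenpos]
      nlinarith
    · rw [div_le_iff₀ hdenpos]
      nlinarith
  have hfpos : ∀ i ∈ Finset.range t,
      (0:ℝ) < (1 - (q : ℝ) ^ ((i : ℤ) - t)) /
        ((1 - (q : ℝ) ^ ((i : ℤ) - n)) * (1 - (q : ℝ) ^ ((i : ℤ) - m))) := fun i hi =>
    lt_of_lt_of_le (by norm_num) (hfact i hi).1
  have hPpos : 0 < P := Finset.prod_pos hfpos
  have hub : P ≤ 4 ^ t := by
    calc P ≤ ∏ _i ∈ Finset.range t, (4:ℝ) :=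
          Finset.prod_le_prod (fun i hi => (hfpos i hi).le) (fun i hi => (hfact i hi).2)
      _ = 4 ^ t := by rw [Finset.prod_const, Finset.card_range]
  have hlb : ((4:ℝ)⁻¹) ^ t ≤ P := by
    calc ((4:ℝ)⁻¹) ^ t = ∏ _i ∈ Finset.range t, (4:ℝ)⁻¹ := by
          rw [Finset.prod_const, Finset.card_range]
      _ ≤ P := Finset.prod_le_prod (fun i hi => by norm_num) (fun i hi => (hfact i hi).1)
  have hbound : |Real.log P| ≤ t * Real.log 4 := by
    rw [abs_le]
    constructor
    · have h1 : Real.log (((4:ℝ)⁻¹) ^ t) ≤ Real.log P :=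
        Real.log_le_log (by positivity) hlb
      rw [Real.log_pow, Real.log_inv] at h1
      push_cast at h1 ⊢
      linarith
    · have h1 : Real.log P ≤ Real.log ((4:ℝ) ^ t) := Real.log_le_log hPpos hub
      rw [Real.log_pow] at h1
      push_cast at h1 ⊢
      linarith
  rw [Real.logb, abs_div, abs_of_pos hlogq]
  gcongr

/-- the AMC capacity `C = nm - log_q |T_{n×m,t}|` satisfies
`C = (m-t)(n-t) + log_q ∏_{i=0}^{t-1} (1-q^{i-t})/((1-q^{i-n})(1-q^{i-m}))`, and for fixed
`n, m, t`, `lim_{q→∞} C = (m-t)(n-t)`. -/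
theorem stmt_9 (F : Type) [Field F] [Fintype F] (n m t : ℕ) (ht : t ≤ min n m) :
    amcCapacity F n m t
      = ((m : ℝ) - t) * ((n : ℝ) - t) +
          Real.logb (Fintype.card F)
            (∏ i ∈ Finset.range t,
              (1 - (Fintype.card F : ℝ) ^ ((i : ℤ) - t)) /
                ((1 - (Fintype.card F : ℝ) ^ ((i : ℤ) - n)) *
                  (1 - (Fintype.card F : ℝ) ^ ((i : ℤ) - m)))) ∧
    (∀ ε > (0 : ℝ), ∃ Q : ℕ,
      ∀ (F' : Type) [Field F'] [Fintype F'], Q < Fintype.card F' →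
        |amcCapacity F' n m t - ((m : ℝ) - t) * ((n : ℝ) - t)| < ε) := by
  obtain ⟨htn, htm⟩ := le_min_iff.mp ht
  refine ⟨amc_main F n m t htn htm, ?_⟩
  intro ε hε
  refine ⟨⌈Real.exp (t * Real.log 4 / ε)⌉₊, ?_⟩
  intro F' _ _ hQ
  have h1 : Real.exp (t * Real.log 4 / ε) ≤ (⌈Real.exp (t * Real.log 4 / ε)⌉₊ : ℝ) :=
    Nat.le_ceil _
  have h2 : ((⌈Real.exp (t * Real.log 4 / ε)⌉₊ : ℕ) : ℝ) < (Fintype.card F' : ℝ) := by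
    exact_mod_cast hQ
  have h3 : Real.exp (t * Real.log 4 / ε) < (Fintype.card F' : ℝ) := lt_of_le_of_lt h1 h2
  have h4 : t * Real.log 4 / ε < Real.log (Fintype.card F') := by
    rw [← Real.log_exp (t * Real.log 4 / ε)]
    exact Real.log_lt_log (Real.exp_pos _) h3
  have hnonneg : (0:ℝ) ≤ t * Real.log 4 / ε :=
    div_nonneg (mul_nonneg (Nat.cast_nonneg t) (Real.log_nonneg (by norm_num))) hε.le
  have hlogpos : 0 < Real.log (Fintype.card F') := lt_of_le_of_lt hnonneg h4
  calc |amcCapacity F' n m t - ((m : ℝ) - t) * ((n : ℝ) - t)|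
      ≤ t * Real.log 4 / Real.log (Fintype.card F') := amc_bound F' n m t htn htm
    _ < ε := by
        rw [div_lt_iff₀ hlogpos]
        have h5 : t * Real.log 4 < Real.log (Fintype.card F') * ε := by
          have := (div_lt_iff₀ hε).mp h4
          linarith
        linarith
end
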